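/- Bob's explicit cheating strategy—applying |0⟩|0⟩ ↦ |0⟩(|0⟩+|1⟩)/√2 and |x+1⟩|0⟩ ↦ |x+1⟩|x⟩ for x ∈ {0,1}, then measuring the ancilla to obtain b—wins the weak coin flipping game with probability exactly ((1/√2)cos²(α/2) + sin²(α/2))². -/

import Mathlib

open Matrix

/-- `|ψ_{a,s}⟩ = cos(α/2)|0⟩ + (−1)^s sin(α/2)|a+1⟩` in `ℂ³`. -/
noncomputable def psit (α : ℝ) (a s : Fin 2) : Fin 3 → ℂ :=
  (Real.cos (α / 2) : ℂ) • (Pi.single 0 1 : Fin 3 → ℂ) +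
    ((-1 : ℂ) ^ (s : ℕ) * (Real.sin (α / 2) : ℂ)) • (Pi.single a.succ 1 : Fin 3 → ℂ)

/-- `|ψ_a⟩ = (1/√2)(|0⟩|ψ_{a,0}⟩ + |1⟩|ψ_{a,1}⟩)` in `ℂ² ⊗ ℂ³`. -/
noncomputable def psi (α : ℝ) (a : Fin 2) : Fin 2 × Fin 3 → ℂ :=
  fun p => (Real.sqrt 2 : ℂ)⁻¹ * psit α a p.1 p.2

/-- Bob's explicit strategy — applying `|0⟩|0⟩ ↦ |0⟩(|0⟩+|1⟩)/√2`,
`|x+1⟩|0⟩ ↦ |x+1⟩|x⟩` to the qutrit and an ancilla, measuring the ancilla (to decide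
the bit `b` to send), and returning the qutrit — wins with probability exactly
`((1/√2)cos²(α/2) + sin²(α/2))²`.  Here `Φ a` is the joint state on `ℂ²⊗ℂ³⊗ℂ²` after
Bob's unitary when Alice picked `a`, the winning ancilla outcome is `e = a`
(upon which Bob sends `b = 1−a`), and the winning probability given `a` is the squared
magnitude of the overlap of the unnormalized post-measurement branch with `|ψ_a⟩`. -/
theorem bob_explicit_strategy (α : ℝ) (hα : α ∈ Set.Icc 0 Real.pi)
    (Φ : Fin 2 → (Fin 2 × Fin 3) × Fin 2 → ℂ)
    (hΦ : ∀ (a t : Fin 2) (j : Fin 3) (e : Fin 2),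
      Φ a ((t, j), e) =
        if j = 0 then (Real.sqrt 2 : ℂ)⁻¹ * psi α a (t, 0)
        else if j = e.succ then psi α a (t, j) else 0) :
    (1 / 2) * ∑ a : Fin 2,
        ‖∑ p : Fin 2 × Fin 3, (starRingEnd ℂ) (psi α a p) * Φ a (p, a)‖ ^ 2 =
      ((Real.sqrt 2)⁻¹ * Real.cos (α / 2) ^ 2 + Real.sin (α / 2) ^ 2) ^ 2 := by
  have key : ∀ a : Fin 2,
      (∑ p : Fin 2 × Fin 3, (starRingEnd ℂ) (psi α a p) * Φ a (p, a)) =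
        (((Real.sqrt 2)⁻¹ * Real.cos (α / 2) ^ 2 + Real.sin (α / 2) ^ 2 : ℝ) : ℂ) := by
    intro a
    have h2 : (Real.sqrt 2 : ℂ) ≠ 0 := by
      norm_cast; positivity
    have h2sq : (Real.sqrt 2 : ℂ) * (Real.sqrt 2 : ℂ) = 2 := by
      norm_cast; exact Real.mul_self_sqrt (by norm_num)
    have hcc : (starRingEnd ℂ) (Complex.cos (↑α / 2)) = Complex.cos (↑α / 2) := by
      rw [show ((α : ℂ) / 2) = ((α / 2 : ℝ) : ℂ) by push_cast; ring,
        ← Complex.ofReal_cos, Complex.conj_ofReal]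
    have hss : (starRingEnd ℂ) (Complex.sin (↑α / 2)) = Complex.sin (↑α / 2) := by
      rw [show ((α : ℂ) / 2) = ((α / 2 : ℝ) : ℂ) by push_cast; ring,
        ← Complex.ofReal_sin, Complex.conj_ofReal]
    fin_cases a <;>
    · simp only [Fintype.sum_prod_type, Fin.sum_univ_succ, Fin.sum_univ_zero, hΦ, psi, psit]
      simp (config := { decide := true }) [Pi.single_apply, Fin.succ, Complex.conj_ofReal, hcc, hss]
      field_simp
      linear_combination (-(Complex.cos ((α : ℂ) / 2) ^ 2) -
        (Real.sqrt 2 : ℂ) * Complex.sin ((α : ℂ) / 2) ^ 2) * h2sq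
  simp only [key, Fin.sum_univ_succ, Fin.sum_univ_zero, Complex.norm_real, Real.norm_eq_abs]
  rw [abs_of_nonneg (by positivity)]
  ring
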